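/- Let ε = (ε_1,…,ε_n) ∈ H^n and let τ ∈ T_n be a segmentation. Then ‖Π_τ ε‖² ≤ 4 D_τ M_n² / (n Λ̲_τ), where M_n := max_{1≤k≤n} ‖Σ_{j=1}^k ε_j‖_H. -/

import Mathlib

open MeasureTheory ProbabilityTheory

/-- A segmentation of `{1, …, n}` with `D` segments: integers
`0 = t 0 < t 1 < ⋯ < t D = n`. -/
structure Seg (n : ℕ) where
  D : ℕ
  t : ℕ → ℕ
  hD : 0 < D
  h0 : t 0 = 0
  hn : t D = n
  hmono : ∀ ℓ < D, t ℓ < t (ℓ + 1)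

namespace Seg

variable {n : ℕ}

/-- The `ℓ`-th segment (`0`-based) of a segmentation, as a set of `0`-based indices:
it corresponds to the paper's segment `λ_{ℓ+1} = {t ℓ + 1, …, t (ℓ+1)}` (1-based). -/
def seg (τ : Seg n) (ℓ : ℕ) : Finset (Fin n) :=
  Finset.univ.filter fun j => τ.t ℓ ≤ (j : ℕ) ∧ (j : ℕ) < τ.t (ℓ + 1)

/-- `Λ̲_τ`: normalized size of the smallest segment. -/
noncomputable def lamMin (τ : Seg n) : ℝ :=
  (((Finset.range τ.D).inf' (Finset.nonempty_range_iff.mpr τ.hD.ne')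
      fun ℓ => τ.t (ℓ + 1) - τ.t ℓ : ℕ) : ℝ) / n

/-- `Λ̄_τ`: normalized size of the largest segment. -/
noncomputable def lamMax (τ : Seg n) : ℝ :=
  (((Finset.range τ.D).sup' (Finset.nonempty_range_iff.mpr τ.hD.ne')
      fun ℓ => τ.t (ℓ + 1) - τ.t ℓ : ℕ) : ℝ) / n

/-- `d∞^{(1)}(τ¹,τ²) = max_{1 ≤ i ≤ D₁−1} min_{1 ≤ j ≤ D₂−1} |τ¹_i − τ²_j|`
(with natural conventions in the degenerate cases where a segmentation has no
interior change-point). -/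
noncomputable def dinf1 (τ1 τ2 : Seg n) : ℕ :=
  if h : 2 ≤ τ1.D ∧ 2 ≤ τ2.D then
    (Finset.Ioo 0 τ1.D).sup fun i =>
      (Finset.Ioo 0 τ2.D).inf' ⟨1, Finset.mem_Ioo.mpr ⟨Nat.one_pos, by omega⟩⟩
        fun j => Nat.dist (τ1.t i) (τ2.t j)
  else if τ1.D = τ2.D then 0 else n

/-- `d∞^{(2)}(τ¹,τ²) = max_{1 ≤ i ≤ D₁−1} min_{0 ≤ j ≤ D₂} |τ¹_i − τ²_j|`. -/
noncomputable def dinf2 (τ1 τ2 : Seg n) : ℕ :=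
  (Finset.Ioo 0 τ1.D).sup fun i =>
    (Finset.Icc 0 τ2.D).inf' ⟨0, Finset.mem_Icc.mpr ⟨le_rfl, Nat.zero_le _⟩⟩
      fun j => Nat.dist (τ1.t i) (τ2.t j)

/-- `d∞^{(3)}(τ¹,τ²) = max_{1 ≤ i ≤ D₁−1} |τ¹_i − τ²_i|` (meaningful when `D₁ = D₂`). -/
noncomputable def dinf3 (τ1 τ2 : Seg n) : ℕ :=
  (Finset.Ioo 0 τ1.D).sup fun i => Nat.dist (τ1.t i) (τ2.t i)

/-- `d_H^{(1)}`. -/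
noncomputable def dH1 (τ1 τ2 : Seg n) : ℕ := max (dinf1 τ1 τ2) (dinf1 τ2 τ1)

/-- `d_H^{(2)}`. -/
noncomputable def dH2 (τ1 τ2 : Seg n) : ℕ := max (dinf2 τ1 τ2) (dinf2 τ2 τ1)

/-- The matrix of the orthogonal projection `Π_τ`:
`(Π_τ)_{ij} = 1/|λ|` if `i, j` are in the same segment `λ` of `τ`, and `0` otherwise. -/
noncomputable def Pmat (τ : Seg n) : Fin n → Fin n → ℝ := fun i j =>
  ∑ ℓ ∈ Finset.range τ.D, if i ∈ τ.seg ℓ ∧ j ∈ τ.seg ℓ then ((τ.seg ℓ).card : ℝ)⁻¹ else 0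

/-- The Frobenius loss `d_F(τ¹,τ²) = ‖Π_{τ¹} − Π_{τ²}‖_F`. -/
noncomputable def dF (τ1 τ2 : Seg n) : ℝ :=
  Real.sqrt (∑ i, ∑ j, (Pmat τ1 i j - Pmat τ2 i j) ^ 2)

/-- The orthogonal projection `Π_τ : H^n → H^n` onto vectors constant on each segment
of `τ`: `(Π_τ x)_i` is the average of `x` over the segment of `τ` containing `i`. -/
noncomputable def proj {H : Type*} [AddCommGroup H] [Module ℝ H]
    (τ : Seg n) (x : Fin n → H) : Fin n → H := fun i =>
  ∑ ℓ ∈ Finset.range τ.D,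
    if τ.t ℓ ≤ (i : ℕ) ∧ (i : ℕ) < τ.t (ℓ + 1)
    then (((τ.t (ℓ + 1) - τ.t ℓ : ℕ) : ℝ))⁻¹ • ∑ j ∈ τ.seg ℓ, x j
    else 0

end Seg

/-- Squared norm on `H^n`: `‖x‖² = Σ_i ‖x_i‖²`. -/
noncomputable def hnorm2 {n : ℕ} {H : Type*} [NormedAddCommGroup H] (x : Fin n → H) : ℝ :=
  ∑ i, ‖x i‖ ^ 2

/-- Inner product on `H^n`: `⟨x, y⟩ = Σ_i ⟨x_i, y_i⟩_H`. -/
noncomputable def hinner {n : ℕ} {H : Type*} [NormedAddCommGroup H] [InnerProductSpace ℝ H]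
    (x y : Fin n → H) : ℝ := ∑ i, inner ℝ (x i) (y i)

/-- `τ` is the true segmentation of `m ∈ H^n`: `m` is constant on every segment of `τ`
and jumps at every interior change-point of `τ`. -/
def IsTrueSeg {n : ℕ} {H : Type*} (τ : Seg n) (m : Fin n → H) : Prop :=
  (∀ ℓ < τ.D, ∀ i ∈ τ.seg ℓ, ∀ j ∈ τ.seg ℓ, m i = m j) ∧
  ∀ ℓ, 0 < ℓ → ℓ < τ.D → ∀ (h1 : τ.t ℓ - 1 < n) (h2 : τ.t ℓ < n),
    m ⟨τ.t ℓ - 1, h1⟩ ≠ m ⟨τ.t ℓ, h2⟩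

/-- The size `‖μ*_{t ℓ + 1} − μ*_{t ℓ}‖` (paper indexing) of the jump of `m` at
the change-point `t ℓ` of `τ`. -/
noncomputable def jumpAt {n : ℕ} {H : Type*} [NormedAddCommGroup H]
    (τ : Seg n) (m : Fin n → H) (ℓ : ℕ) : ℝ :=
  if h : 0 < τ.t ℓ ∧ τ.t ℓ < n then ‖m ⟨τ.t ℓ, h.2⟩ - m ⟨τ.t ℓ - 1, by omega⟩‖ else 0

/-- `Δ̲`: size of the smallest jump of `m` (over the change-points of `τ`). -/
noncomputable def deltaMin {n : ℕ} {H : Type*} [NormedAddCommGroup H]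
    (τ : Seg n) (m : Fin n → H) : ℝ :=
  if h : 2 ≤ τ.D then
    (Finset.Ioo 0 τ.D).inf' ⟨1, Finset.mem_Ioo.mpr ⟨Nat.one_pos, by omega⟩⟩ (jumpAt τ m)
  else 0

/-- `Δ̄`: size of the largest jump of `m` (over the change-points of `τ`). -/
noncomputable def deltaMax {n : ℕ} {H : Type*} [NormedAddCommGroup H]
    (τ : Seg n) (m : Fin n → H) : ℝ :=
  if h : 2 ≤ τ.D then
    (Finset.Ioo 0 τ.D).sup' ⟨1, Finset.mem_Ioo.mpr ⟨Nat.one_pos, by omega⟩⟩ (jumpAt τ m)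
  else 0

/-- The value of `m` at the first index of the `ℓ`-th segment of `τ`; if `m` is constant
on each segment of `τ`, this is the common value `μ*_{λ_ℓ}` of `m` on that segment. -/
noncomputable def segVal {n : ℕ} {H : Type*} [AddCommGroup H]
    (τ : Seg n) (m : Fin n → H) (ℓ : ℕ) : H :=
  if h : τ.t ℓ < n then m ⟨τ.t ℓ, h⟩ else 0

/-- `M_n = max_{1 ≤ k ≤ n} ‖ε_1 + ⋯ + ε_k‖` (the value at `k = 0` is `0`, which does not
affect the maximum). -/
noncomputable def Mmax {n : ℕ} {H : Type*} [NormedAddCommGroup H] (ε : Fin n → H) : ℝ :=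
  (Finset.range (n + 1)).sup' (Finset.nonempty_range_iff.mpr (Nat.succ_ne_zero n))
    fun k => ‖∑ j ∈ Finset.univ.filter (fun j : Fin n => (j : ℕ) < k), ε j‖

namespace Seg
variable {n : ℕ} (τ : Seg n)

lemma t_lt_t {a b : ℕ} (hab : a < b) (hb : b ≤ τ.D) : τ.t a < τ.t b := by
  induction b with
  | zero => omega
  | succ b ih =>
    have h2 := τ.hmono b (by omega)
    rcases Nat.lt_succ_iff_lt_or_eq.mp hab with h | h
    · exact lt_trans (ih h (by omega)) h2
    · subst h; exact h2

lemma t_le_t {a b : ℕ} (hab : a ≤ b) (hb : b ≤ τ.D) : τ.t a ≤ τ.t b := by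
  rcases eq_or_lt_of_le hab with rfl | h
  · exact le_rfl
  · exact (τ.t_lt_t h hb).le

lemma n_pos (τ : Seg n) : 0 < n := by
  have := τ.t_lt_t τ.hD le_rfl
  rw [τ.h0, τ.hn] at this
  exact this

lemma exists_seg (i : Fin n) : ∃ ℓ, ℓ < τ.D ∧ τ.t ℓ ≤ (i : ℕ) ∧ (i : ℕ) < τ.t (ℓ + 1) := by
  have hex : ∃ ℓ, (i : ℕ) < τ.t (ℓ + 1) := by
    refine ⟨τ.D - 1, ?_⟩
    have : τ.D - 1 + 1 = τ.D := by have := τ.hD; omega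
    rw [this, τ.hn]; exact i.2
  classical
  refine ⟨Nat.find hex, ?_, ?_, Nat.find_spec hex⟩
  · by_contra h
    have h1 : τ.D ≤ Nat.find hex := by omega
    have h2 : τ.D - 1 + 1 = τ.D := by have := τ.hD; omega
    have := Nat.find_min' hex (m := τ.D - 1) (by rw [h2, τ.hn]; exact i.2)
    omega
  · rcases Nat.eq_zero_or_pos (Nat.find hex) with h | h
    · rw [h, τ.h0]; exact Nat.zero_le _
    · have := Nat.find_min hex (m := Nat.find hex - 1) (by omega)
      have he : Nat.find hex - 1 + 1 = Nat.find hex := by omega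
      rw [he] at this
      omega

lemma seg_unique {i : Fin n} {ℓ ℓ' : ℕ} (h : ℓ < τ.D ∧ τ.t ℓ ≤ (i : ℕ) ∧ (i : ℕ) < τ.t (ℓ + 1))
    (h' : ℓ' < τ.D ∧ τ.t ℓ' ≤ (i : ℕ) ∧ (i : ℕ) < τ.t (ℓ' + 1)) : ℓ = ℓ' := by
  by_contra hne
  rcases Nat.lt_or_ge ℓ ℓ' with hlt | hge
  · have := τ.t_le_t (show ℓ + 1 ≤ ℓ' by omega) (by omega)
    omega
  · have := τ.t_le_t (show ℓ' + 1 ≤ ℓ by omega) (by omega)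
    omega

noncomputable def segIdx (i : Fin n) : ℕ := (τ.exists_seg i).choose

lemma segIdx_spec (i : Fin n) :
    τ.segIdx i < τ.D ∧ τ.t (τ.segIdx i) ≤ (i : ℕ) ∧ (i : ℕ) < τ.t (τ.segIdx i + 1) :=
  (τ.exists_seg i).choose_spec

lemma card_seg {ℓ : ℕ} (hℓ : ℓ < τ.D) : (τ.seg ℓ).card = τ.t (ℓ + 1) - τ.t ℓ := by
  have hub : τ.t (ℓ + 1) ≤ n := by
    have := τ.t_le_t (show ℓ + 1 ≤ τ.D by omega) le_rfl
    rw [τ.hn] at this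
    exact this
  rw [← Nat.card_Ico]
  refine Finset.card_bij (fun j _ => (j : ℕ)) ?_ ?_ ?_
  · intro j hj
    simp only [seg, Finset.mem_filter] at hj
    exact Finset.mem_Ico.mpr ⟨hj.2.1, hj.2.2⟩
  · intro a ha b hb hab
    exact Fin.ext hab
  · intro m hm
    rw [Finset.mem_Ico] at hm
    exact ⟨⟨m, by omega⟩, by simp [seg, hm.1, hm.2], rfl⟩


lemma proj_apply {H : Type*} [AddCommGroup H] [Module ℝ H] (τ : Seg n) (ε : Fin n → H)
    (i : Fin n) {ℓ : ℕ} (h : ℓ < τ.D ∧ τ.t ℓ ≤ (i : ℕ) ∧ (i : ℕ) < τ.t (ℓ + 1)) :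
    proj τ ε i = ((τ.t (ℓ + 1) - τ.t ℓ : ℕ) : ℝ)⁻¹ • ∑ j ∈ τ.seg ℓ, ε j := by
  unfold proj
  rw [Finset.sum_eq_single ℓ]
  · rw [if_pos ⟨h.2.1, h.2.2⟩]
  · intro b hb hne
    rw [if_neg]
    intro hcon
    exact hne (τ.seg_unique ⟨Finset.mem_range.mp hb, hcon⟩ h)
  · intro hc; exact absurd (Finset.mem_range.mpr h.1) hc

lemma sum_seg_eq {H : Type*} [AddCommGroup H] (τ : Seg n) (ε : Fin n → H)
    {ℓ : ℕ} (hℓ : ℓ < τ.D) :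
    ∑ j ∈ τ.seg ℓ, ε j =
      (∑ j ∈ Finset.univ.filter (fun j : Fin n => (j : ℕ) < τ.t (ℓ + 1)), ε j) -
      (∑ j ∈ Finset.univ.filter (fun j : Fin n => (j : ℕ) < τ.t ℓ), ε j) := by
  have hsub : Finset.univ.filter (fun j : Fin n => (j : ℕ) < τ.t ℓ) ⊆
      Finset.univ.filter (fun j : Fin n => (j : ℕ) < τ.t (ℓ + 1)) := by
    intro j hj
    simp only [Finset.mem_filter, Finset.mem_univ, true_and] at *
    have := τ.hmono ℓ hℓ
    omega
  have hdiff : τ.seg ℓ = Finset.univ.filter (fun j : Fin n => (j : ℕ) < τ.t (ℓ + 1)) \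
      Finset.univ.filter (fun j : Fin n => (j : ℕ) < τ.t ℓ) := by
    ext j
    simp only [seg, Finset.mem_filter, Finset.mem_sdiff, Finset.mem_univ, true_and]
    omega
  rw [hdiff, eq_sub_iff_add_eq, Finset.sum_sdiff hsub]


end Seg

/-- Lemma 5.5: `‖Π_τ ε‖² ≤ 4 D_τ M_n² / (n Λ̲_τ)` where
`M_n = max_{1 ≤ k ≤ n} ‖Σ_{j=1}^k ε_j‖`. -/
theorem quadratic_term_deterministic_bound {H : Type*}
    [NormedAddCommGroup H] [InnerProductSpace ℝ H]
    {n : ℕ} (τ : Seg n) (ε : Fin n → H) :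
    hnorm2 (Seg.proj τ ε) ≤ 4 * (τ.D : ℝ) * (Mmax ε) ^ 2 / (n * Seg.lamMin τ) := by
  classical
  have hn : 0 < n := τ.n_pos
  have hM0 : 0 ≤ Mmax ε := by
    have := Finset.le_sup' (f := fun k => ‖∑ j ∈ Finset.univ.filter (fun j : Fin n => (j : ℕ) < k), ε j‖)
      (Finset.mem_range.mpr (Nat.succ_pos n) : 0 ∈ Finset.range (n + 1))
    exact le_trans (norm_nonneg _) this
  have hMk : ∀ k ≤ n, ‖∑ j ∈ Finset.univ.filter (fun j : Fin n => (j : ℕ) < k), ε j‖ ≤ Mmax ε := by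
    intro k hk
    exact Finset.le_sup'
      (f := fun k => ‖∑ j ∈ Finset.univ.filter (fun j : Fin n => (j : ℕ) < k), ε j‖)
      (Finset.mem_range.mpr (by omega))
  set mn : ℕ := (Finset.range τ.D).inf' (Finset.nonempty_range_iff.mpr τ.hD.ne')
      (fun ℓ => τ.t (ℓ + 1) - τ.t ℓ) with hmn
  have hmnpos : 0 < mn := by
    rw [hmn, Finset.lt_inf'_iff]
    intro ℓ hℓ
    have := τ.hmono ℓ (Finset.mem_range.mp hℓ)
    omega
  have hRHS : 4 * (τ.D : ℝ) * (Mmax ε) ^ 2 / (n * Seg.lamMin τ)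
      = 4 * (τ.D : ℝ) * (Mmax ε) ^ 2 / (mn : ℝ) := by
    unfold Seg.lamMin
    rw [← hmn]
    congr 1
    field_simp
  rw [hRHS]
  -- partition the sum
  have hpart : hnorm2 (Seg.proj τ ε)
      = ∑ ℓ ∈ Finset.range τ.D, ∑ i ∈ τ.seg ℓ, ‖Seg.proj τ ε i‖ ^ 2 := by
    unfold hnorm2
    rw [← Finset.sum_fiberwise_of_maps_to (g := τ.segIdx)
      (fun i _ => Finset.mem_range.mpr (τ.segIdx_spec i).1)]
    refine Finset.sum_congr rfl fun ℓ hℓ => ?_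
    refine Finset.sum_congr ?_ fun _ _ => rfl
    ext i
    simp only [Seg.seg, Finset.mem_filter, Finset.mem_univ, true_and]
    constructor
    · rintro rfl
      exact ⟨(τ.segIdx_spec i).2.1, (τ.segIdx_spec i).2.2⟩
    · intro h
      exact τ.seg_unique (τ.segIdx_spec i) ⟨Finset.mem_range.mp hℓ, h⟩
  rw [hpart]
  have hseg : ∀ ℓ ∈ Finset.range τ.D,
      ∑ i ∈ τ.seg ℓ, ‖Seg.proj τ ε i‖ ^ 2 ≤ 4 * (Mmax ε) ^ 2 / (mn : ℝ) := by
    intro ℓ hℓ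
    have hℓD := Finset.mem_range.mp hℓ
    set L : ℕ := τ.t (ℓ + 1) - τ.t ℓ with hL
    have hLpos : 0 < L := by have := τ.hmono ℓ hℓD; omega
    set S : H := ∑ j ∈ τ.seg ℓ, ε j with hS
    have hval : ∀ i ∈ τ.seg ℓ, ‖Seg.proj τ ε i‖ ^ 2 = ‖S‖ ^ 2 / (L : ℝ) ^ 2 := by
      intro i hi
      simp only [Seg.seg, Finset.mem_filter, Finset.mem_univ, true_and] at hi
      rw [Seg.proj_apply τ ε i ⟨hℓD, hi.1, hi.2⟩, norm_smul, mul_pow, ← hS, ← hL]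
      rw [norm_inv, Real.norm_natCast, inv_pow]
      rw [div_eq_inv_mul]
    rw [Finset.sum_congr rfl hval, Finset.sum_const, τ.card_seg hℓD, ← hL, nsmul_eq_mul]
    have hnormS : ‖S‖ ≤ 2 * Mmax ε := by
      rw [hS, Seg.sum_seg_eq τ ε hℓD]
      refine le_trans (norm_sub_le _ _) ?_
      have h1 := hMk (τ.t (ℓ + 1)) (by
        have := τ.t_le_t (show ℓ + 1 ≤ τ.D by omega) le_rfl
        rw [τ.hn] at this; exact this)
      have h2 := hMk (τ.t ℓ) (by
        have := τ.t_le_t (show ℓ ≤ τ.D by omega) le_rfl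
        rw [τ.hn] at this; exact this)
      linarith
    have hS2 : ‖S‖ ^ 2 ≤ 4 * (Mmax ε) ^ 2 := by
      have := sq_le_sq' (by linarith [norm_nonneg S]) hnormS
      calc ‖S‖ ^ 2 ≤ (2 * Mmax ε) ^ 2 := this
        _ = 4 * (Mmax ε) ^ 2 := by ring
    have hmnL : (mn : ℝ) ≤ (L : ℝ) := by
      exact_mod_cast Finset.inf'_le _ hℓ
    have hLr : (0:ℝ) < L := by exact_mod_cast hLpos
    have hmnr : (0:ℝ) < mn := by exact_mod_cast hmnpos
    calc (L : ℝ) * (‖S‖ ^ 2 / (L : ℝ) ^ 2) = ‖S‖ ^ 2 / (L : ℝ) := by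
          field_simp
      _ ≤ 4 * (Mmax ε) ^ 2 / (mn : ℝ) :=
          div_le_div₀ (by positivity) hS2 hmnr hmnL
  calc ∑ ℓ ∈ Finset.range τ.D, ∑ i ∈ τ.seg ℓ, ‖Seg.proj τ ε i‖ ^ 2
      ≤ ∑ ℓ ∈ Finset.range τ.D, (4 * (Mmax ε) ^ 2 / (mn : ℝ)) := Finset.sum_le_sum hseg
    _ = (τ.D : ℝ) * (4 * (Mmax ε) ^ 2 / (mn : ℝ)) := by
        rw [Finset.sum_const, Finset.card_range, nsmul_eq_mul]
    _ = 4 * (τ.D : ℝ) * (Mmax ε) ^ 2 / (mn : ℝ) := by ring
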